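/- Concatenation of a Shannon code with an ID-code for the ideal channel: if a channel N^{⊗n} admits a transmission code with M codewords and maximal error probability ≤ μ (i.e., states ρ_m and a POVM (E_m)_{m=1}^M with tr(N^{⊗n}(ρ_m)E_m) ≥ 1−μ), and there exists an ID-code for the ideal M-ary channel with N messages and errors λ₁, λ₂ (i.e., probability distributions P_i on {1,…,M} and sets A_i ⊆ {1,…,M} with P_i(A_i) ≥ 1−λ₁ and P_j(A_i) ≤ λ₂ for j ≠ i), then N^{⊗n} admits a (simultaneous) identification code with N messages and errors of first and second kind at most λ₁ + μ and λ₂ + μ respectively, given by ρ'_i = ∑_m P_i(m)ρ_m and D_i = ∑_{m∈A_i} E_m. -/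

import Mathlib

open Matrix
open scoped Kronecker ComplexOrder
noncomputable section

/-- The Choi matrix of a linear map between matrix algebras. -/
def choi {a b : ℕ} (Φ : Matrix (Fin a) (Fin a) ℂ →ₗ[ℂ] Matrix (Fin b) (Fin b) ℂ) :
    Matrix (Fin a × Fin b) (Fin a × Fin b) ℂ :=
  ∑ i, ∑ j, (Matrix.single i j (1 : ℂ)) ⊗ₖ Φ (Matrix.single i j 1)

/-- A linear map between matrix algebras is cptp iff its Choi matrix is positive
semidefinite (complete positivity) and it preserves the trace. -/
def IsCPTP {a b : ℕ} (Φ : Matrix (Fin a) (Fin a) ℂ →ₗ[ℂ] Matrix (Fin b) (Fin b) ℂ) : Prop :=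
  (choi Φ).PosSemidef ∧ ∀ ρ, (Φ ρ).trace = ρ.trace

/-- A density operator: positive semidefinite with unit trace. -/
def IsState {d : ℕ} (ρ : Matrix (Fin d) (Fin d) ℂ) : Prop := ρ.PosSemidef ∧ ρ.trace = 1

/-- The trace norm `‖X‖₁ = tr √(XᴴX)`. -/
def traceNorm {d : ℕ} (X : Matrix (Fin d) (Fin d) ℂ) : ℝ :=
  (((Matrix.posSemidef_conjTranspose_mul_self X).1.eigenvectorUnitary.1 *
      Matrix.diagonal (((↑) : ℝ → ℂ) ∘ (√·) ∘ (Matrix.posSemidef_conjTranspose_mul_self X).1.eigenvalues) *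
      (star (Matrix.posSemidef_conjTranspose_mul_self X).1.eigenvectorUnitary :
        Matrix (Fin d) (Fin d) ℂ)).trace).re

/- ### Auxiliary lemmas -/

lemma psd_trace_re_nonneg {n : Type*} [Fintype n] [DecidableEq n] {A : Matrix n n ℂ}
    (hA : A.PosSemidef) : 0 ≤ A.trace.re := by
  have h : ∀ i, 0 ≤ (A i i).re := by
    intro i
    have h2 := hA.re_dotProduct_nonneg (Pi.single i 1)
    simpa [Matrix.mulVec, dotProduct, Pi.single_apply] using h2
  rw [Matrix.trace, Complex.re_sum]
  exact Finset.sum_nonneg fun i _ => h i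

lemma trace_mul_psd_re_nonneg {n : Type*} [Fintype n] [DecidableEq n] {A B : Matrix n n ℂ}
    (hA : A.PosSemidef) (hB : B.PosSemidef) : 0 ≤ ((A * B).trace).re := by
  open scoped MatrixOrder in
  obtain ⟨c, rfl⟩ := CStarAlgebra.nonneg_iff_eq_star_mul_self.mp hB.nonneg
  have key : (A * (star c * c)).trace = (c * A * cᴴ).trace := by
    rw [Matrix.star_eq_conjTranspose, ← mul_assoc, Matrix.trace_mul_comm, ← mul_assoc]
  rw [key]
  exact psd_trace_re_nonneg (hA.mul_mul_conjTranspose_same c)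

lemma kron_posSemidef {m n : Type*} [Fintype m] [Fintype n] [DecidableEq m] [DecidableEq n]
    {A : Matrix m m ℂ} {B : Matrix n n ℂ} (hA : A.PosSemidef) (hB : B.PosSemidef) :
    (A ⊗ₖ B).PosSemidef := by
  exact hA.kronecker hB

lemma trace_stdBasis_mul {n : ℕ} (i j : Fin n) (B : Matrix (Fin n) (Fin n) ℂ) :
    (Matrix.single i j (1 : ℂ) * B).trace = B j i := by
  simp [Matrix.trace, Matrix.diag, Matrix.mul_apply, Matrix.single, ite_and,
    Finset.sum_ite_eq]

lemma pairing_eq {a b : ℕ} (T : Matrix (Fin a) (Fin a) ℂ →ₗ[ℂ] Matrix (Fin b) (Fin b) ℂ)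
    (ρ : Matrix (Fin a) (Fin a) ℂ) (X : Matrix (Fin b) (Fin b) ℂ) :
    (T ρ * X).trace = ((choi T) * (ρᵀ ⊗ₖ X)).trace := by
  have hρ : ρ = ∑ i, ∑ j, (ρ i j) • Matrix.single i j (1 : ℂ) := by
    conv_lhs => rw [Matrix.matrix_eq_sum_single ρ]
    simp [Matrix.smul_single]
  have lhs : (T ρ * X).trace
      = ∑ i, ∑ j, (ρ i j) * (T (Matrix.single i j 1) * X).trace := by
    conv_lhs => rw [hρ]
    rw [map_sum, Finset.sum_mul, Matrix.trace_sum]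
    refine Finset.sum_congr rfl fun i _ => ?_
    rw [map_sum, Finset.sum_mul, Matrix.trace_sum]
    refine Finset.sum_congr rfl fun j _ => ?_
    rw [_root_.map_smul, smul_mul_assoc, Matrix.trace_smul, smul_eq_mul]
  have rhs : ((choi T) * (ρᵀ ⊗ₖ X)).trace
      = ∑ i, ∑ j, (ρ i j) * (T (Matrix.single i j 1) * X).trace := by
    rw [choi, Finset.sum_mul, Matrix.trace_sum]
    refine Finset.sum_congr rfl fun i _ => ?_
    rw [Finset.sum_mul, Matrix.trace_sum]
    refine Finset.sum_congr rfl fun j _ => ?_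
    rw [← Matrix.mul_kronecker_mul, Matrix.trace_kronecker, trace_stdBasis_mul,
      Matrix.transpose_apply]
  rw [lhs, rhs]

lemma sum_psd {n : Type*} [Fintype n] {ι : Type*} (s : Finset ι) (f : ι → Matrix n n ℂ)
    (h : ∀ m ∈ s, (f m).PosSemidef) : (∑ m ∈ s, f m).PosSemidef := by
  classical
  induction s using Finset.induction with
  | empty => simpa using Matrix.PosSemidef.zero
  | @insert x s hx ih =>
    rw [Finset.sum_insert hx]
    exact (h x (by simp)).add (ih fun m hm => h m (by simp [hm]))

/-- Concatenating a transmission code (with maximal error `μ`) with an ID-code for the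
ideal `M`-ary channel (errors `λ₁, λ₂`) yields an identification code with errors at
most `λ₁ + μ` and `λ₂ + μ`, via `ρ'ᵢ = ∑ₘ Pᵢ(m)ρₘ` and `Dᵢ = ∑_{m∈Aᵢ} Eₘ`. -/
theorem concatenation_transmission_and_ideal_id
    {a b : ℕ} (T : Matrix (Fin a) (Fin a) ℂ →ₗ[ℂ] Matrix (Fin b) (Fin b) ℂ)
    (hT : IsCPTP T) {M : ℕ}
    (ρ : Fin M → Matrix (Fin a) (Fin a) ℂ) (hρ : ∀ m, IsState (ρ m))
    (E : Fin M → Matrix (Fin b) (Fin b) ℂ)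
    (hEpos : ∀ m, (E m).PosSemidef) (hEsum : ∑ m, E m = (1 : Matrix (Fin b) (Fin b) ℂ))
    (μ : ℝ) (htrans : ∀ m, 1 - μ ≤ ((T (ρ m) * E m).trace).re)
    {N : ℕ} (P : Fin N → Fin M → ℝ)
    (hP0 : ∀ i m, 0 ≤ P i m) (hP1 : ∀ i, ∑ m, P i m = 1)
    (A : Fin N → Finset (Fin M))
    (lam₁ lam₂ : ℝ)
    (hid1 : ∀ i, 1 - lam₁ ≤ ∑ m ∈ A i, P i m)
    (hid2 : ∀ i j, j ≠ i → ∑ m ∈ A i, P j m ≤ lam₂) :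
    ∀ i, ((∑ m ∈ A i, E m).PosSemidef ∧
          ((1 : Matrix (Fin b) (Fin b) ℂ) - ∑ m ∈ A i, E m).PosSemidef) ∧
      1 - (lam₁ + μ) ≤
        ((T (∑ m, ((P i m : ℝ) : ℂ) • ρ m) * ∑ m ∈ A i, E m).trace).re ∧
      ∀ j, j ≠ i →
        ((T (∑ m, ((P j m : ℝ) : ℂ) • ρ m) * ∑ m ∈ A i, E m).trace).re ≤ lam₂ + μ := by
  obtain ⟨hC, hTr⟩ := hT
  intro i
  classical
  set D : Matrix (Fin b) (Fin b) ℂ := ∑ m ∈ A i, E m with hDdef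
  have pair : ∀ (σ : Matrix (Fin a) (Fin a) ℂ) (X : Matrix (Fin b) (Fin b) ℂ),
      σ.PosSemidef → X.PosSemidef → 0 ≤ ((T σ * X).trace).re := by
    intro σ X hσ hX
    rw [pairing_eq]
    exact trace_mul_psd_re_nonneg hC (kron_posSemidef hσ.transpose hX)
  have hD : D.PosSemidef := sum_psd _ _ fun m _ => hEpos m
  have hcompl : (1 : Matrix (Fin b) (Fin b) ℂ) - D = ∑ m ∈ (A i)ᶜ, E m := by
    rw [← hEsum, ← Finset.sum_add_sum_compl (A i) E, hDdef, add_sub_cancel_left]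
  have hDc : ((1 : Matrix (Fin b) (Fin b) ℂ) - D).PosSemidef := by
    rw [hcompl]; exact sum_psd _ _ fun m _ => hEpos m
  have hσ1 : ∀ m, ((T (ρ m)).trace) = 1 := fun m => by rw [hTr, (hρ m).2]
  have mono : ∀ (m : Fin M) (X Y : Matrix (Fin b) (Fin b) ℂ), (Y - X).PosSemidef →
      ((T (ρ m) * X).trace).re ≤ ((T (ρ m) * Y).trace).re := by
    intro m X Y h
    have h0 := pair (ρ m) (Y - X) (hρ m).1 h
    rw [mul_sub, Matrix.trace_sub, Complex.sub_re] at h0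
    linarith
  have tr_one : ∀ m, ((T (ρ m) * 1).trace).re = 1 := by
    intro m; rw [mul_one, hσ1]; simp
  set t : Fin M → ℝ := fun m => ((T (ρ m) * D).trace).re with htdef
  have tnn : ∀ m, 0 ≤ t m := fun m => pair _ _ (hρ m).1 hD
  have tle1 : ∀ m, t m ≤ 1 := by
    intro m
    have h := mono m D 1 hDc
    rw [tr_one] at h; exact h
  have tA : ∀ m ∈ A i, 1 - μ ≤ t m := by
    intro m hm
    refine le_trans (htrans m) (mono m (E m) D ?_)
    have h : D - E m = ∑ m' ∈ (A i).erase m, E m' := by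
      rw [hDdef, ← Finset.add_sum_erase _ E hm, add_sub_cancel_left]
    rw [h]; exact sum_psd _ _ fun m' _ => hEpos m'
  have hEle1 : ∀ m, ((T (ρ m) * E m).trace).re ≤ 1 := by
    intro m
    have h1 : (1 : Matrix (Fin b) (Fin b) ℂ) - E m = ∑ m' ∈ Finset.univ.erase m, E m' := by
      rw [← hEsum, ← Finset.add_sum_erase _ E (Finset.mem_univ m), add_sub_cancel_left]
    have h := mono m (E m) 1 (by rw [h1]; exact sum_psd _ _ fun m' _ => hEpos m')
    rw [tr_one] at h; exact h
  have tnA : ∀ m ∉ A i, t m ≤ μ := by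
    intro m hm
    have hmc : m ∈ (A i)ᶜ := Finset.mem_compl.mpr hm
    have h : (1 : Matrix (Fin b) (Fin b) ℂ) - E m - D = ∑ m' ∈ ((A i)ᶜ).erase m, E m' := by
      have hc := hcompl
      rw [← Finset.add_sum_erase _ E hmc] at hc
      rw [sub_sub, add_comm (E m) D, ← sub_sub, hc, add_sub_cancel_left]
    have h2 := mono m D (1 - E m) (by rw [h]; exact sum_psd _ _ fun m' _ => hEpos m')
    have h3 : ((T (ρ m) * (1 - E m)).trace).re = 1 - ((T (ρ m) * E m).trace).re := by
      rw [mul_sub, Matrix.trace_sub, Complex.sub_re, mul_one, hσ1]; simp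
    have h4 := htrans m
    rw [h3] at h2; linarith
  have hM : 0 < M := by
    rcases Nat.eq_zero_or_pos M with h | h
    · exfalso; have h2 := hP1 i; subst h; simp at h2
    · exact h
  have hμ : 0 ≤ μ := by
    have h1 := htrans ⟨0, hM⟩
    have h2 := hEle1 ⟨0, hM⟩
    linarith
  have hSle1 : ∀ (j : Fin N) (s : Finset (Fin M)), ∑ m ∈ s, P j m ≤ 1 := by
    intro j s
    rw [← hP1 j]
    exact Finset.sum_le_sum_of_subset_of_nonneg (Finset.subset_univ s) fun m _ _ => hP0 j m
  have hlam1 : 0 ≤ lam₁ := by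
    have h1 := hid1 i; have h2 := hSle1 i (A i); linarith
  have hmix : ∀ j : Fin N,
      ((T (∑ m, ((P j m : ℝ) : ℂ) • ρ m) * D).trace).re = ∑ m, P j m * t m := by
    intro j
    rw [map_sum, Finset.sum_mul, Matrix.trace_sum, Complex.re_sum]
    refine Finset.sum_congr rfl fun m _ => ?_
    rw [_root_.map_smul, smul_mul_assoc, Matrix.trace_smul, smul_eq_mul, Complex.mul_re]
    simp [htdef]
  refine ⟨⟨hD, hDc⟩, ?_, ?_⟩
  · rw [hmix i]
    have hsub : ∑ m ∈ A i, P i m * t m ≤ ∑ m, P i m * t m :=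
      Finset.sum_le_sum_of_subset_of_nonneg (Finset.subset_univ _)
        fun m _ _ => mul_nonneg (hP0 i m) (tnn m)
    have hlow : ∑ m ∈ A i, P i m * (1 - μ) ≤ ∑ m ∈ A i, P i m * t m :=
      Finset.sum_le_sum fun m hm => mul_le_mul_of_nonneg_left (tA m hm) (hP0 i m)
    rw [← Finset.sum_mul] at hlow
    have hS1 := hid1 i
    have hS2 := hSle1 i (A i)
    nlinarith [hsub, hlow]
  · intro j hj
    rw [hmix j]
    rw [← Finset.sum_add_sum_compl (A i) (fun m => P j m * t m)]
    have h1 : ∑ m ∈ A i, P j m * t m ≤ ∑ m ∈ A i, P j m :=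
      calc ∑ m ∈ A i, P j m * t m ≤ ∑ m ∈ A i, P j m * 1 :=
            Finset.sum_le_sum fun m _ => mul_le_mul_of_nonneg_left (tle1 m) (hP0 j m)
        _ = ∑ m ∈ A i, P j m := by simp
    have h2 : ∑ m ∈ (A i)ᶜ, P j m * t m ≤ ∑ m ∈ (A i)ᶜ, P j m * μ :=
      Finset.sum_le_sum fun m hm =>
        mul_le_mul_of_nonneg_left (tnA m (Finset.mem_compl.mp hm)) (hP0 j m)
    rw [← Finset.sum_mul] at h2
    have h3 := hSle1 j ((A i)ᶜ)
    have h4 := hid2 i j hj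
    have h5 : (0 : ℝ) ≤ ∑ m ∈ (A i)ᶜ, P j m := Finset.sum_nonneg fun m _ => hP0 j m
    nlinarith [h1, h2]
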